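/- Let Q : ℝⁿ → ℝ be Q(x) = (x - x̂)ᵀP⁻¹(x - x̂) + Σᵢ (cᵢᵀx - yᵢ)²/rᵢ with P symmetric positive definite and rᵢ > 0. Then Q has a unique global minimizer x* = x̂ + K(y - Cx̂), where C is the matrix with rows cᵢᵀ, R = diag(r₁,…,r_m), and K = P Cᵀ (C P Cᵀ + R)⁻¹. -/

import Mathlib

open Matrix

lemma symm_dot_swap {n : ℕ} (M : Matrix (Fin n) (Fin n) ℝ) (hM : Mᵀ = M)
    (x s : Fin n → ℝ) : x ⬝ᵥ M *ᵥ s = s ⬝ᵥ M *ᵥ x := by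
  rw [dotProduct_mulVec, ← mulVec_transpose, hM, dotProduct_comm]

lemma quad_diff {n : ℕ} (M : Matrix (Fin n) (Fin n) ℝ) (hM : Mᵀ = M)
    (s x : Fin n → ℝ) :
    (x ⬝ᵥ M *ᵥ x - 2 * ((M *ᵥ s) ⬝ᵥ x)) - (s ⬝ᵥ M *ᵥ s - 2 * ((M *ᵥ s) ⬝ᵥ s))
      = (x - s) ⬝ᵥ M *ᵥ (x - s) := by
  have h1 : x ⬝ᵥ M *ᵥ s = s ⬝ᵥ M *ᵥ x := symm_dot_swap M hM x s
  have h2 : (M *ᵥ s) ⬝ᵥ x = s ⬝ᵥ M *ᵥ x := by rw [dotProduct_comm, h1]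
  have h3 : (M *ᵥ s) ⬝ᵥ s = s ⬝ᵥ M *ᵥ s := dotProduct_comm _ _
  simp only [Matrix.mulVec_sub, dotProduct_sub, sub_dotProduct, h1, h2, h3]
  ring

lemma quad_shift {n : ℕ} (A : Matrix (Fin n) (Fin n) ℝ) (hA : Aᵀ = A)
    (v x : Fin n → ℝ) :
    (x - v) ⬝ᵥ A *ᵥ (x - v)
      = x ⬝ᵥ A *ᵥ x - 2 * ((A *ᵥ v) ⬝ᵥ x) + v ⬝ᵥ A *ᵥ v := by
  have h1 : x ⬝ᵥ A *ᵥ v = v ⬝ᵥ A *ᵥ x := symm_dot_swap A hA x v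
  have h2 : (A *ᵥ v) ⬝ᵥ x = v ⬝ᵥ A *ᵥ x := by rw [dotProduct_comm, h1]
  simp only [Matrix.mulVec_sub, dotProduct_sub, sub_dotProduct, h1, h2]
  ring

theorem kalman_update_is_map_minimizer (n m : ℕ)
    (P : Matrix (Fin n) (Fin n) ℝ) (hP : P.PosDef) (hPsymm : P.IsSymm)
    (xhat : Fin n → ℝ) (c : Fin m → (Fin n → ℝ)) (y : Fin m → ℝ)
    (r : Fin m → ℝ) (hr : ∀ i, 0 < r i)
    (C : Matrix (Fin m) (Fin n) ℝ) (hC : C = Matrix.of c)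
    (R : Matrix (Fin m) (Fin m) ℝ) (hR : R = Matrix.diagonal r)
    (K : Matrix (Fin n) (Fin m) ℝ) (hK : K = P * Cᵀ * (C * P * Cᵀ + R)⁻¹)
    (Q : (Fin n → ℝ) → ℝ)
    (hQ : Q = fun x => (x - xhat) ⬝ᵥ (P⁻¹ *ᵥ (x - xhat))
        + ∑ i, (c i ⬝ᵥ x - y i) ^ 2 / r i)
    (xstar : Fin n → ℝ) (hxstar : xstar = xhat + K *ᵥ (y - C *ᵥ xhat)) :
    ∀ x : Fin n → ℝ, x ≠ xstar → Q xstar < Q x := by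
  -- basic positive-definiteness facts
  have hRpd : R.PosDef := by rw [hR]; exact Matrix.PosDef.diagonal hr
  have hRinv : R⁻¹.PosDef := hRpd.inv
  have hPinv : P⁻¹.PosDef := hP.inv
  have hCH : Cᴴ = Cᵀ := Matrix.conjTranspose_eq_transpose_of_trivial C
  have hSpd : (C * P * Cᵀ + R).PosDef := by
    have := (hP.posSemidef.mul_mul_conjTranspose_same C)
    rw [hCH] at this
    exact Matrix.PosDef.posSemidef_add this hRpd
  -- the Hessian matrix
  set M : Matrix (Fin n) (Fin n) ℝ := P⁻¹ + Cᵀ * R⁻¹ * C with hM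
  have hMpd : M.PosDef := by
    have := (hRinv.posSemidef.conjTranspose_mul_mul_same C)
    rw [hCH] at this
    exact hPinv.add_posSemidef this
  have hMsymm : Mᵀ = M := by
    have := hMpd.isHermitian
    rwa [Matrix.IsHermitian, Matrix.conjTranspose_eq_transpose_of_trivial] at this
  -- invertibility facts
  have hPu : IsUnit P.det := isUnit_iff_ne_zero.mpr hP.det_pos.ne'
  have hRu : IsUnit R.det := isUnit_iff_ne_zero.mpr hRpd.det_pos.ne'
  have hSu : IsUnit (C * P * Cᵀ + R).det := isUnit_iff_ne_zero.mpr hSpd.det_pos.ne'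
  -- key matrix identity: M * K = Cᵀ * R⁻¹
  have hMK : M * K = Cᵀ * R⁻¹ := by
    have h1 : M * (P * Cᵀ) = Cᵀ * R⁻¹ * (C * P * Cᵀ + R) := by
      have hRR : Cᵀ * R⁻¹ * R = Cᵀ := by
        rw [Matrix.mul_assoc, Matrix.nonsing_inv_mul R hRu, Matrix.mul_one]
      rw [hM, Matrix.add_mul, ← Matrix.mul_assoc, Matrix.nonsing_inv_mul P hPu, Matrix.one_mul,
        Matrix.mul_add, hRR]
      simp only [Matrix.mul_assoc]
      rw [add_comm]
    rw [hK, ← Matrix.mul_assoc, h1, Matrix.mul_assoc,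
      Matrix.mul_nonsing_inv _ hSu, Matrix.mul_one]
  -- stationarity: M *ᵥ xstar = b
  set b : Fin n → ℝ := P⁻¹ *ᵥ xhat + Cᵀ *ᵥ (R⁻¹ *ᵥ y) with hb
  have hstat : M *ᵥ xstar = b := by
    rw [hxstar, Matrix.mulVec_add, Matrix.mulVec_mulVec, hMK, hb]
    rw [Matrix.mulVec_sub, hM, Matrix.add_mulVec]
    simp only [← Matrix.mulVec_mulVec]
    abel
  -- rewrite Q as a quadratic form
  have hsum : ∀ x : Fin n → ℝ, ∑ i, (c i ⬝ᵥ x - y i) ^ 2 / r i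
      = (C *ᵥ x - y) ⬝ᵥ R⁻¹ *ᵥ (C *ᵥ x - y) := by
    intro x
    have hRi : R⁻¹ = Matrix.diagonal (fun i => (r i)⁻¹) := by
      rw [hR]
      apply Matrix.inv_eq_right_inv
      have h1 : (fun i => r i * (r i)⁻¹) = fun _ => (1:ℝ) :=
        funext fun i => mul_inv_cancel₀ (hr i).ne'
      rw [Matrix.diagonal_mul_diagonal, h1, Matrix.diagonal_one]
    rw [hRi]
    simp only [dotProduct, Matrix.mulVec_diagonal, Pi.sub_apply]
    refine Finset.sum_congr rfl fun i _ => ?_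
    have hCx : (C *ᵥ x) i = ∑ j, c i j * x j := by rw [hC]; rfl
    rw [hCx]
    field_simp
  have hQform : ∀ x : Fin n → ℝ, Q x = x ⬝ᵥ M *ᵥ x - 2 * (b ⬝ᵥ x)
      + (xhat ⬝ᵥ P⁻¹ *ᵥ xhat + y ⬝ᵥ R⁻¹ *ᵥ y) := by
    intro x
    have hPis : P⁻¹ᵀ = P⁻¹ := by
      rw [Matrix.transpose_nonsing_inv, hPsymm.eq]
    have hRis : R⁻¹ᵀ = R⁻¹ := by
      rw [Matrix.transpose_nonsing_inv, hR, Matrix.diagonal_transpose]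
    rw [hQ]
    simp only
    rw [hsum x, quad_shift P⁻¹ hPis xhat x, quad_shift R⁻¹ hRis y (C *ᵥ x)]
    have e1 : (C *ᵥ x) ⬝ᵥ R⁻¹ *ᵥ (C *ᵥ x) = x ⬝ᵥ (Cᵀ * R⁻¹ * C) *ᵥ x := by
      rw [← Matrix.mulVec_mulVec, ← Matrix.mulVec_mulVec, dotProduct_mulVec x,
        ← Matrix.mulVec_transpose, Matrix.mulVec_mulVec, Matrix.transpose_transpose,
        dotProduct_comm, dotProduct_mulVec, ← Matrix.mulVec_transpose]
    have e2 : (R⁻¹ *ᵥ y) ⬝ᵥ (C *ᵥ x) = (Cᵀ *ᵥ (R⁻¹ *ᵥ y)) ⬝ᵥ x := by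
      rw [Matrix.mulVec_transpose, ← dotProduct_mulVec]
    rw [hM, hb]
    simp only [Matrix.add_mulVec, dotProduct_add, add_dotProduct, e1, e2]
    ring
  -- conclude
  intro x hx
  have hdiff : Q x - Q xstar = (x - xstar) ⬝ᵥ M *ᵥ (x - xstar) := by
    rw [hQform x, hQform xstar, ← hstat, ← quad_diff M hMsymm xstar x]
    ring
  have hpos : 0 < (x - xstar) ⬝ᵥ M *ᵥ (x - xstar) := by
    have := hMpd.dotProduct_mulVec_pos (x := x - xstar) (sub_ne_zero.mpr hx)
    simpa using this
  linarith
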